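/- Flattening lemma for pushouts of types: let f : X → A and g : X → B be functions between types, let C be the pushout of f and g (the set-level pushout in the category of types) with structure maps i : A → C and j : B → C satisfying i ∘ f = j ∘ g, and let P : C → Type be a type family. Then the square whose vertices are Σ (x : X), P(i(f x)); Σ (a : A), P(i a); Σ (b : B), P(j b); and Σ (c : C), P c, with the maps induced by f, g, i, j on first components (transporting the second component along the commutation identity where needed), is again a pushout square in the category of types. -/

import Mathlib

universe u

/-- `i : A → C` and `j : B → C` exhibit `C` as the (set-level) pushout of `f : X → A` and
`g : X → B` in the category of types: the square commutes and satisfies the universal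
property of pushouts. -/
def IsTypePushout {X A B C : Type u} (f : X → A) (g : X → B) (i : A → C) (j : B → C) : Prop :=
  (∀ x, i (f x) = j (g x)) ∧
    ∀ (Z : Type u) (u : A → Z) (v : B → Z), (∀ x, u (f x) = v (g x)) →
      ∃! w : C → Z, (∀ a, w (i a) = u a) ∧ (∀ b, w (j b) = v b)

/-- The generating relation of the canonical pushout of `f` and `g`. -/
def PRel {X A B : Type u} (f : X → A) (g : X → B) : A ⊕ B → A ⊕ B → Prop :=
  fun s t => ∃ x, s = Sum.inl (f x) ∧ t = Sum.inr (g x)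

/-- The comparison map from the canonical pushout to a cone. -/
def pushE {X A B C : Type u} (f : X → A) (g : X → B) (i : A → C) (j : B → C)
    (hcomm : ∀ x, i (f x) = j (g x)) : Quot (PRel f g) → C :=
  Quot.lift (Sum.elim i j) (by rintro s t ⟨x, rfl, rfl⟩; exact hcomm x)

theorem ndrec_fun_eq {α : Sort*} {Q : α → Sort*} {Z : Sort*} {a b : α} (h : a = b)
    (F : Q a → Z) :
    (Eq.ndrec (motive := fun x => Q x → Z) F h) = fun p => F (cast (congrArg Q h).symm p) := by
  subst h; rfl

/-- Dependent recursion over the canonical pushout, for defining the flattened map. -/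
def flatRec {X A B C : Type u} (f : X → A) (g : X → B) (i : A → C) (j : B → C)
    (hcomm : ∀ x, i (f x) = j (g x)) (P : C → Type u) {Z : Type u}
    (u : (Σ a : A, P (i a)) → Z) (v : (Σ b : B, P (j b)) → Z)
    (huv : ∀ xp : Σ x : X, P (i (f x)),
      u ⟨f xp.1, xp.2⟩ = v ⟨g xp.1, cast (congrArg P (hcomm xp.1)) xp.2⟩) :
    ∀ q : Quot (PRel f g), P (pushE f g i j hcomm q) → Z := by
  refine Quot.rec (fun s => Sum.rec (fun a p => u ⟨a, p⟩) (fun b p => v ⟨b, p⟩) s) ?_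
  rintro s t ⟨x, rfl, rfl⟩
  refine (ndrec_fun_eq (Q := fun q => P (pushE f g i j hcomm q)) (Z := Z)
    (Quot.sound ⟨x, rfl, rfl⟩) (fun p => u ⟨f x, p⟩)).trans ?_
  funext p
  have h1 : P (j (g x)) = P (i (f x)) := congrArg P (hcomm x).symm
  have hp : (cast (congrArg (fun q => P (pushE f g i j hcomm q))
      (Quot.sound (⟨x, rfl, rfl⟩ : PRel f g (Sum.inl (f x)) (Sum.inr (g x))))).symm p)
      = cast h1 p := by
    congr 1
  rw [hp]
  have := huv ⟨x, cast h1 p⟩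
  simp only at this
  rw [this]
  exact congrArg (fun q => v ⟨g x, q⟩) ((cast_cast _ _ _).trans (cast_eq _ _))

/-- Flattening lemma for pushouts of types: if `C` is the pushout of `f : X → A` and
`g : X → B`, with structure maps `i, j` satisfying `i ∘ f = j ∘ g`, and `P : C → Type` is a
type family, then the square of total spaces, with maps induced by `f, g, i, j` on first
components (transporting the second component along the commutation identity where needed),
is again a pushout square in the category of types. -/
theorem flattening_pushout {X A B C : Type u} (f : X → A) (g : X → B) (i : A → C) (j : B → C)
    (hcomm : ∀ x, i (f x) = j (g x)) (hpo : IsTypePushout f g i j) (P : C → Type u) :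
    IsTypePushout
      (fun xp : Σ x : X, P (i (f x)) => (⟨f xp.1, xp.2⟩ : Σ a : A, P (i a)))
      (fun xp : Σ x : X, P (i (f x)) =>
        (⟨g xp.1, cast (congrArg P (hcomm xp.1)) xp.2⟩ : Σ b : B, P (j b)))
      (fun ap : Σ a : A, P (i a) => (⟨i ap.1, ap.2⟩ : Σ c : C, P c))
      (fun bp : Σ b : B, P (j b) => (⟨j bp.1, bp.2⟩ : Σ c : C, P c)) := by
  obtain ⟨-, huniv⟩ := hpo
  set e := pushE f g i j hcomm with he_def
  obtain ⟨e', ⟨he'i, he'j⟩, -⟩ := huniv (Quot (PRel f g))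
    (fun a => Quot.mk _ (Sum.inl a)) (fun b => Quot.mk _ (Sum.inr b))
    (fun x => Quot.sound ⟨x, rfl, rfl⟩)
  have ee' : ∀ c, e (e' c) = c := by
    obtain ⟨w0, -, huniq⟩ := huniv C i j hcomm
    have h1 : (fun c => e (e' c)) = w0 := by
      refine huniq _ ⟨fun a => ?_, fun b => ?_⟩
      · show e (e' (i a)) = i a; rw [he'i]; rfl
      · show e (e' (j b)) = j b; rw [he'j]; rfl
    have h2 : (fun c => c) = w0 := huniq _ ⟨fun _ => rfl, fun _ => rfl⟩
    intro c
    exact (congrFun h1 c).trans (congrFun h2 c).symm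
  have surj : ∀ c : C, (∃ a, i a = c) ∨ (∃ b, j b = c) := by
    intro c
    have := ee' c
    induction' hq : e' c using Quot.ind with s
    rcases s with a | b
    · left; exact ⟨a, by rw [← this, hq]; rfl⟩
    · right; exact ⟨b, by rw [← this, hq]; rfl⟩
  constructor
  · rintro ⟨x, p⟩
    exact Sigma.ext (hcomm x) ((cast_heq _ _).symm)
  intro Z u v huv
  have huv' : ∀ xp : Σ x : X, P (i (f x)),
      u ⟨f xp.1, xp.2⟩ = v ⟨g xp.1, cast (congrArg P (hcomm xp.1)) xp.2⟩ := fun xp => huv xp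
  set W := flatRec f g i j hcomm P u v huv' with hW
  refine ⟨fun cp => W (e' cp.1) (cast (congrArg P (ee' cp.1)).symm cp.2), ⟨?_, ?_⟩, ?_⟩
  · rintro ⟨a, p⟩
    simp only
    have hq : e' (i a) = Quot.mk (PRel f g) (Sum.inl a) := he'i a
    have key : ∀ (q : Quot (PRel f g)) (hqq : q = Quot.mk (PRel f g) (Sum.inl a)) p',
        W q p' = u ⟨a, cast (congrArg (fun q => P (e q)) hqq) p'⟩ := by
      rintro q rfl p'
      rfl
    rw [key _ hq]; exact congrArg (fun q => u ⟨a, q⟩) ((cast_cast _ _ _).trans (cast_eq _ _))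
  · rintro ⟨b, p⟩
    simp only
    have hq : e' (j b) = Quot.mk (PRel f g) (Sum.inr b) := he'j b
    have key : ∀ (q : Quot (PRel f g)) (hqq : q = Quot.mk (PRel f g) (Sum.inr b)) p',
        W q p' = v ⟨b, cast (congrArg (fun q => P (e q)) hqq) p'⟩ := by
      rintro q rfl p'
      rfl
    rw [key _ hq]; exact congrArg (fun q => v ⟨b, q⟩) ((cast_cast _ _ _).trans (cast_eq _ _))
  · rintro w' ⟨hw'a, hw'b⟩
    funext cp
    obtain ⟨c, p⟩ := cp
    rcases surj c with ⟨a, rfl⟩ | ⟨b, rfl⟩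
    · have h1 := hw'a ⟨a, p⟩
      simp only at h1
      rw [h1]
      have hq : e' (i a) = Quot.mk (PRel f g) (Sum.inl a) := he'i a
      have key : ∀ (q : Quot (PRel f g)) (hqq : q = Quot.mk (PRel f g) (Sum.inl a)) p',
          W q p' = u ⟨a, cast (congrArg (fun q => P (e q)) hqq) p'⟩ := by
        rintro q rfl p'
        rfl
      rw [key _ hq]; exact congrArg (fun q => u ⟨a, q⟩) ((cast_cast _ _ _).trans (cast_eq _ _)).symm
    · have h1 := hw'b ⟨b, p⟩
      simp only at h1
      rw [h1]
      have hq : e' (j b) = Quot.mk (PRel f g) (Sum.inr b) := he'j b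
      have key : ∀ (q : Quot (PRel f g)) (hqq : q = Quot.mk (PRel f g) (Sum.inr b)) p',
          W q p' = v ⟨b, cast (congrArg (fun q => P (e q)) hqq) p'⟩ := by
        rintro q rfl p'
        rfl
      rw [key _ hq]; exact congrArg (fun q => v ⟨b, q⟩) ((cast_cast _ _ _).trans (cast_eq _ _)).symm
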